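/- Let X be a metrizable space with Stone–Čech compactification βX. For every closed subset B of the remainder βX \ X and every open neighborhood U of B in βX \ X, there exists a closed subset A of X such that B ⊆ βA \ A ⊆ U, where βA is identified with the closure of A in βX (so βA \ A = cl_{βX}(A) ∩ (βX \ X)). -/

import Mathlib

open TopologicalSpace Set Metric

/-- For a T₃.₅ space, the unit of the Stone–Čech compactification is inducing. -/
lemma aux_isInducing_stoneCechUnit {X : Type*} [TopologicalSpace X] [T35Space X] :
    Topology.IsInducing (stoneCechUnit : X → StoneCech X) := by
  rw [Topology.isInducing_iff_nhds]
  intro x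
  refine le_antisymm ((continuous_stoneCechUnit.tendsto x).le_comap) ?_
  intro s hs
  obtain ⟨o, hos, hoop, hxo⟩ := mem_nhds_iff.mp hs
  obtain ⟨f, hfc, hfx, hfK⟩ :=
    CompletelyRegularSpace.completely_regular x oᶜ hoop.isClosed_compl (fun h => h hxo)
  refine Filter.mem_comap.mpr ⟨stoneCechExtend hfc ⁻¹' ({1}ᶜ), ?_, ?_⟩
  · refine (IsOpen.preimage (continuous_stoneCechExtend hfc)
      isClosed_singleton.isOpen_compl).mem_nhds ?_
    have h1 : stoneCechExtend hfc (stoneCechUnit x) = f x :=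
      congrFun (stoneCechExtend_extends hfc) x
    have h2 : stoneCechExtend hfc (stoneCechUnit x) ≠ 1 := by
      rw [h1, hfx]
      intro h
      have := congrArg (fun t : unitInterval => (t : ℝ)) h
      norm_num at this
    simpa using h2
  · intro y hy
    have h1 : stoneCechExtend hfc (stoneCechUnit y) = f y :=
      congrFun (stoneCechExtend_extends hfc) y
    simp only [mem_preimage, mem_compl_iff, mem_singleton_iff, h1] at hy
    have hyo : y ∈ o := by
      by_contra hyo
      exact hy (hfK hyo)
    exact hos hyo

/-- Let `X` be metrizable with Stone–Čech compactification `βX` and remainder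
`βX \ X` (the complement of the range of `stoneCechUnit`). For every closed subset `B` of the
remainder and every open neighbourhood `U` of `B` in the remainder, there is a closed `A ⊆ X`
with `B ⊆ βA \ A ⊆ U`, where `βA` is identified with the closure of `A` in `βX`, so that
`βA \ A = cl_{βX}(A) ∩ (βX \ X)`. -/
theorem remainder_closed_sandwich_stoneCech
    {X : Type*} [TopologicalSpace X] [MetrizableSpace X]
    (rem : Set (StoneCech X))
    (hrem : rem = (Set.range (stoneCechUnit : X → StoneCech X))ᶜ)
    (B U : Set (StoneCech X)) (hB : B ⊆ rem) (hU : U ⊆ rem)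
    (hBclosed : ∃ C : Set (StoneCech X), IsClosed C ∧ B = C ∩ rem)
    (hUopen : ∃ V : Set (StoneCech X), IsOpen V ∧ U = V ∩ rem)
    (hBU : B ⊆ U) :
    ∃ A : Set X, IsClosed A ∧
      B ⊆ closure (stoneCechUnit '' A) ∩ rem ∧
      closure (stoneCechUnit '' A) ∩ rem ⊆ U := by
  letI : MetricSpace X := TopologicalSpace.metrizableSpaceMetric X
  haveI : T35Space X := inferInstance
  obtain ⟨C, hCcl, hBC⟩ := hBclosed
  obtain ⟨V, hVop, hUV⟩ := hUopen
  set u : X → StoneCech X := stoneCechUnit with hu_def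
  have hu : Continuous u := continuous_stoneCechUnit
  have hind : Topology.IsInducing u := aux_isInducing_stoneCechUnit
  have hdense : Dense (Set.range u) := denseRange_stoneCechUnit
  -- the closed set `D = cl(rem \ U)`
  set D : Set (StoneCech X) := closure (rem \ U) with hD
  have hDcl : IsClosed D := isClosed_closure
  have hremU_V : rem \ U ⊆ Vᶜ := by
    intro w hw hwV
    exact hw.2 (by rw [hUV]; exact ⟨hwV, hw.1⟩)
  have hDV : D ⊆ Vᶜ := closure_minimal hremU_V hVop.isClosed_compl
  have hDrem : D ∩ rem ⊆ rem \ U := by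
    rintro z ⟨hzD, hzrem⟩
    refine ⟨hzrem, fun hzU => ?_⟩
    rw [hUV] at hzU
    exact hDV hzD hzU.1
  -- `K = C ∩ D` is a compact subset of (the copy of) `X`
  set K : Set (StoneCech X) := C ∩ D with hK
  have hKcl : IsClosed K := hCcl.inter hDcl
  have hKrange : K ⊆ Set.range u := by
    intro z hz
    by_contra h
    have hzrem : z ∈ rem := by rw [hrem]; exact h
    have hzB : z ∈ B := by rw [hBC]; exact ⟨hz.1, hzrem⟩
    exact (hDrem ⟨hz.2, hzrem⟩).2 (hBU hzB)
  set K₀ : Set X := u ⁻¹' K with hK₀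
  have hK₀cl : IsClosed K₀ := hKcl.preimage hu
  have hK₀cpt : IsCompact K₀ :=
    hind.isCompact_preimage' (hKcl.isCompact) hKrange
  -- metric neighbourhoods of `K₀`
  set G : ℕ → Set X := fun n => Metric.thickening (1 / (n + 1 : ℝ)) K₀ with hG
  have hGopen : ∀ n, IsOpen (G n) := fun n => Metric.isOpen_thickening
  have hGanti : ∀ m n : ℕ, m ≤ n → G n ⊆ G m := by
    intro m n hmn
    apply Metric.thickening_mono
    apply one_div_le_one_div_of_le
    · positivity
    · have : (m : ℝ) ≤ n := Nat.cast_le.mpr hmn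
      linarith
  have hK₀G : ∀ n, K₀ ⊆ G n :=
    fun n => Metric.self_subset_thickening (by positivity) _
  -- open sets `O n` around `K` in `βX`
  set O : ℕ → Set (StoneCech X) := fun n => (closure (u '' (G n)ᶜ))ᶜ with hO
  have hOopen : ∀ n, IsOpen (O n) := fun n => isClosed_closure.isOpen_compl
  have hKO : ∀ n, K ⊆ O n := by
    intro n z hz
    obtain ⟨x, rfl⟩ := hKrange hz
    have hx0 : x ∈ K₀ := hz
    intro hmem
    have hxc : x ∈ closure ((G n)ᶜ) := by
      rw [hind.closure_eq_preimage_closure_image]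
      exact hmem
    rw [(hGopen n).isClosed_compl.closure_eq] at hxc
    exact hxc (hK₀G n hx0)
  -- Urysohn functions separating `C` from `D \ O n`
  have hsep : ∀ n, ∃ f : C(StoneCech X, ℝ),
      EqOn f 0 C ∧ EqOn f 1 (D \ O n) ∧ ∀ y, f y ∈ Icc (0 : ℝ) 1 := by
    intro n
    apply exists_continuous_zero_one_of_isClosed hCcl (hDcl.sdiff (hOopen n))
    rw [Set.disjoint_left]
    intro y hyC hyD
    exact hyD.2 (hKO n ⟨hyC, hyD.1⟩)
  choose f hf0 hf1 hf01 using hsep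
  -- the closed sets `As n ⊆ X`
  set As : ℕ → Set X := fun n => {x | ∀ i, i ≤ n → f i (u x) ≤ 1 / 2} with hAs
  have hAscl : ∀ n, IsClosed (As n) := by
    intro n
    have : As n = ⋂ i ∈ {i : ℕ | i ≤ n}, (fun x => f i (u x)) ⁻¹' Iic (1 / 2 : ℝ) := by
      ext x; simp [hAs]
    rw [this]
    exact isClosed_biInter fun i _ => isClosed_Iic.preimage ((f i).continuous.comp hu)
  have hAsanti : ∀ m n : ℕ, m ≤ n → As n ⊆ As m :=
    fun m n hmn x hx i hi => hx i (hi.trans hmn)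
  have hBA : ∀ n, B ⊆ closure (u '' As n) := by
    intro n p hp
    have hpC : p ∈ C := by rw [hBC] at hp; exact hp.1
    set W : Set (StoneCech X) := ⋂ i ∈ Finset.range (n + 1), (f i) ⁻¹' Iio (1 / 2 : ℝ) with hW
    have hWop : IsOpen W := isOpen_biInter_finset fun i _ => isOpen_Iio.preimage (f i).continuous
    have hpW : p ∈ W := by
      rw [hW, mem_iInter₂]
      intro i _
      simp only [mem_preimage, mem_Iio, hf0 i hpC]
      norm_num
    have hWsub : W ∩ Set.range u ⊆ u '' As n := by
      rintro y ⟨hyW, x, rfl⟩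
      refine ⟨x, fun i hi => ?_, rfl⟩
      rw [hW, mem_iInter₂] at hyW
      exact le_of_lt (hyW i (Finset.mem_range.mpr (Nat.lt_succ_of_le hi)))
    exact closure_mono hWsub (hdense.open_subset_closure_inter hWop hpW)
  have hArem : ∀ n, closure (u '' As n) ∩ (rem \ U) ⊆ O n := by
    rintro n q ⟨hq1, hq2⟩
    by_contra hqO
    have hqD : q ∈ D := subset_closure hq2
    have h1 : f n q = 1 := hf1 n ⟨hqD, hqO⟩
    have hle : f n q ≤ 1 / 2 := by
      have hsub : closure (u '' As n) ⊆ (f n) ⁻¹' Iic (1 / 2 : ℝ) := by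
        apply closure_minimal _ (isClosed_Iic.preimage (f n).continuous)
        rintro y ⟨x, hx, rfl⟩
        exact hx n le_rfl
      exact hsub hq1
    rw [h1] at hle; norm_num at hle
  -- the candidate set
  set A : Set X := K₀ ∪ ⋃ n, (As n \ G n) with hA
  -- small thickenings are inside any open set around `K`
  have hGsmall : ∀ O' : Set (StoneCech X), IsOpen O' → K ⊆ O' → ∃ m, u '' G m ⊆ O' := by
    intro O' hO'op hKO'
    have hsub : K₀ ⊆ u ⁻¹' O' := fun x hx => hKO' hx
    obtain ⟨δ, hδ, hth⟩ := hK₀cpt.exists_thickening_subset_open (hO'op.preimage hu) hsub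
    obtain ⟨m, hm⟩ := exists_nat_one_div_lt hδ
    refine ⟨m, ?_⟩
    rintro y ⟨x, hx, rfl⟩
    exact hth (Metric.thickening_mono hm.le K₀ hx)
  -- `A` is closed
  have hball : ∀ x : X, x ∉ K₀ → ∃ δ > (0 : ℝ), ∃ m : ℕ, Metric.ball x δ ∩ G m = ∅ := by
    intro x hx
    rcases eq_empty_or_nonempty K₀ with h0 | h0
    · exact ⟨1, one_pos, 0, by simp [hG, h0, Metric.thickening_empty]⟩
    · have hd : 0 < Metric.infDist x K₀ := (hK₀cl.notMem_iff_infDist_pos h0).mp hx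
      obtain ⟨m, hm⟩ := exists_nat_one_div_lt (half_pos hd)
      refine ⟨Metric.infDist x K₀ / 2, half_pos hd, m, ?_⟩
      rw [Set.eq_empty_iff_forall_notMem]
      rintro y ⟨hy1, hy2⟩
      obtain ⟨k, hk, hdk⟩ := Metric.mem_thickening_iff.mp hy2
      have h1 : Metric.infDist x K₀ ≤ dist x k := Metric.infDist_le_dist_of_mem hk
      have h2 : dist x k ≤ dist x y + dist y k := dist_triangle _ _ _
      have h3 : dist x y < Metric.infDist x K₀ / 2 := by
        rw [dist_comm]; exact Metric.mem_ball.mp hy1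
      linarith
  have hAclosed : IsClosed A := by
    apply isClosed_of_closure_subset
    intro x hx
    by_cases hxK : x ∈ K₀
    · exact Or.inl hxK
    obtain ⟨δ, hδ, m, hbm⟩ := hball x hxK
    set S : Set X := ⋃ i ∈ Finset.range (m + 1), (As i \ G i) with hS
    have hScl : IsClosed S :=
      (Finset.range (m + 1)).finite_toSet.isClosed_biUnion
        fun i _ => (hAscl i).sdiff (hGopen i)
    have hsub : A ∩ Metric.ball x δ ⊆ S := by
      rintro z ⟨hzA, hzb⟩
      have hzG : z ∉ G m := fun h => Set.eq_empty_iff_forall_notMem.mp hbm z ⟨hzb, h⟩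
      rcases hzA with hzK | hzU
      · exact absurd (hK₀G m hzK) hzG
      obtain ⟨n, hn⟩ := mem_iUnion.mp hzU
      by_cases hnm : n ≤ m
      · exact mem_biUnion (Finset.mem_range.mpr (Nat.lt_succ_of_le hnm)) hn
      · have hzm : z ∈ As m := hAsanti m n (le_of_not_ge hnm) hn.1
        exact mem_biUnion (Finset.self_mem_range_succ m) ⟨hzm, hzG⟩
    have hx2 : x ∈ closure (Metric.ball x δ ∩ A) :=
      Metric.isOpen_ball.inter_closure ⟨Metric.mem_ball_self hδ, hx⟩
    have hxS : x ∈ S :=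
      hScl.closure_subset (closure_mono (fun z hz => hsub ⟨hz.2, hz.1⟩) hx2)
    obtain ⟨i, _, hiS⟩ := Set.mem_iUnion₂.mp hxS
    exact Or.inr (mem_iUnion.mpr ⟨i, hiS⟩)
  -- `B ⊆ cl(u '' A)`
  have hBsub : B ⊆ closure (u '' A) := by
    intro p hp
    have hprem : p ∈ (Set.range u)ᶜ := by rw [← hrem]; exact hB hp
    have hpK : p ∉ K := fun h => hprem (hKrange h)
    rw [_root_.mem_closure_iff]
    intro N hNop hpN
    have hmem : N ∩ Kᶜ ∈ nhds p := (hNop.inter hKcl.isOpen_compl).mem_nhds ⟨hpN, hpK⟩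
    obtain ⟨s, hs_mem, hscl, hssub⟩ := exists_mem_nhds_isClosed_subset hmem
    set M : Set (StoneCech X) := interior s with hM
    have hpM : p ∈ M := mem_interior_iff_mem_nhds.mpr hs_mem
    have hMsub : closure M ⊆ N ∩ Kᶜ :=
      (closure_minimal interior_subset hscl).trans hssub
    obtain ⟨m, hm⟩ := hGsmall (closure M)ᶜ isClosed_closure.isOpen_compl
      (fun z hz hzM => (hMsub hzM).2 hz)
    obtain ⟨y, hyM, hyAm⟩ := _root_.mem_closure_iff.mp (hBA m hp) M isOpen_interior hpM
    obtain ⟨x, hxAs, rfl⟩ := hyAm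
    have hxG : x ∉ G m := fun h => (hm ⟨x, h, rfl⟩) (subset_closure hyM)
    exact ⟨u x, (hMsub (subset_closure hyM)).1,
      ⟨x, Or.inr (mem_iUnion.mpr ⟨m, hxAs, hxG⟩), rfl⟩⟩
  -- `cl(u '' A) ∩ rem ⊆ U`
  have hupper : closure (u '' A) ∩ rem ⊆ U := by
    rintro q ⟨hqcl, hqrem⟩
    by_contra hqU
    have hq2 : q ∈ rem \ U := ⟨hqrem, hqU⟩
    have hqrange : q ∉ Set.range u := by rw [hrem] at hqrem; exact hqrem
    by_cases hall : ∀ n, q ∈ closure (u '' As n)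
    · have hqO : ∀ n, q ∈ O n := fun n => hArem n ⟨hall n, hq2⟩
      have hdisjK : Disjoint K {q} :=
        Set.disjoint_left.mpr fun z hz hzq => by
          rw [mem_singleton_iff] at hzq
          exact hqrange (hzq ▸ hKrange hz)
      obtain ⟨O', M, hO'op, hMop, hKO', hqM, hdisj⟩ :=
        NormalSpace.normal K {q} hKcl isClosed_singleton hdisjK
      obtain ⟨m, hm⟩ := hGsmall O' hO'op hKO'
      have hsub2 : O m ∩ Set.range u ⊆ u '' G m := by
        rintro y ⟨hyO, x, rfl⟩
        refine ⟨x, ?_, rfl⟩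
        by_contra hxG
        exact hyO (subset_closure ⟨x, hxG, rfl⟩)
      have hq4 : q ∈ closure (u '' G m) :=
        closure_mono hsub2 (hdense.open_subset_closure_inter (hOopen m) (hqO m))
      have hclO' : closure O' ⊆ Mᶜ :=
        closure_minimal (fun z hz hzM => hdisj.ne_of_mem hz hzM rfl)
          hMop.isClosed_compl
      exact hclO' (closure_mono hm hq4) (hqM rfl)
    · push_neg at hall
      obtain ⟨n, hn⟩ := hall
      have hdecomp : u '' A ⊆ (K ∪ u '' As n) ∪ ⋃ i ∈ Finset.range n, u '' (As i \ G i) := by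
        rintro y ⟨x, hxA, rfl⟩
        rcases hxA with hK0 | hUn
        · exact Or.inl (Or.inl hK0)
        obtain ⟨i, hi⟩ := mem_iUnion.mp hUn
        by_cases hin : i < n
        · exact Or.inr (mem_biUnion (Finset.mem_range.mpr hin) ⟨x, hi, rfl⟩)
        · exact Or.inl (Or.inr ⟨x, hAsanti n i (le_of_not_gt hin) hi.1, rfl⟩)
      have hq5 : q ∈ closure (K ∪ u '' As n) ∪
          ⋃ i ∈ Finset.range n, closure (u '' (As i \ G i)) := by
        have := closure_mono hdecomp hqcl
        rwa [closure_union, Finset.closure_biUnion] at this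
      rcases hq5 with hq5 | hq6
      · rw [closure_union, hKcl.closure_eq] at hq5
        rcases hq5 with hq5 | hq5
        · exact hqrange (hKrange hq5)
        · exact hn hq5
      · obtain ⟨i, _, hq7⟩ := Set.mem_iUnion₂.mp hq6
        have h8 : q ∈ closure (u '' As i) :=
          closure_mono (Set.image_mono diff_subset) hq7
        have h9 : q ∈ O i := hArem i ⟨h8, hq2⟩
        have h10 : q ∈ closure (u '' (G i)ᶜ) :=
          closure_mono (Set.image_mono (fun z hz => hz.2)) hq7
        exact h9 h10
  exact ⟨A, hAclosed, fun p hp => ⟨hBsub hp, hB hp⟩, hupper⟩
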